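/- Assume ρ < 1 and let γ ∈ ℂ with 0 < |γ| ≤ ρ². Then the kernel equation, regarded as a cubic polynomial equation in δ, has exactly one root δ (counted with multiplicity) with |δ| < |γ|/2, and that root is nonzero. -/

import Mathlib

/-- The load ρ = λ(ā²+a²)/(2λ̄āa). -/
noncomputable def rhoLoad (a lam : ℝ) : ℝ :=
  lam * ((1-a)^2 + a^2) / (2 * (1-lam) * (1-a) * a)

open Polynomial in
/-- The kernel equation as a cubic polynomial in δ (for fixed γ). -/
noncomputable def kernelCubic (a lam : ℝ) (g : ℂ) : Polynomial ℂ :=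
  C ((lam:ℂ)*(1-(a:ℂ))*(a:ℂ)) * X^3
  + C ((1-(lam:ℂ))*(1-(a:ℂ))*(a:ℂ)*g + (lam:ℂ)*((a:ℂ)^2+(1-(a:ℂ))^2)) * X^2
  - C ((1 - ((1-(lam:ℂ))*((1-(a:ℂ))^2+(a:ℂ)^2) + (lam:ℂ)*(a:ℂ)*(1-(a:ℂ)))) * g) * X
  + C ((1-(lam:ℂ))*(1-(a:ℂ))*(a:ℂ)*g^2)

private lemma habs_sub (x y : ℂ) :
    ‖x - y‖ ≤ ‖x‖ + ‖y‖ := by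
  simpa [sub_eq_add_neg] using norm_add_le x (-y)

open Polynomial in
private lemma cubic_coeff3 (A B Cc D : ℂ) :
    (C A * X^3 + C B * X^2 - C Cc * X + C D).coeff 3 = A := by
  simp [Polynomial.coeff_add, Polynomial.coeff_sub, Polynomial.coeff_C_mul,
    Polynomial.coeff_X_pow, Polynomial.coeff_C, Polynomial.coeff_X]

open Polynomial in
private lemma cubic_vieta (A B Cc D e1 e2 e3 : ℂ)
    (h : C A * X^3 + C B * X^2 - C Cc * X + C D
       = C A * (X^3 - C e1 * X^2 + C e2 * X - C e3)) :
    A * e1 = -B ∧ A * e2 = -Cc := by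
  have h2 := congrArg (fun q : Polynomial ℂ => q.coeff 2) h
  have h1 := congrArg (fun q : Polynomial ℂ => q.coeff 1) h
  simp only [Polynomial.coeff_add, Polynomial.coeff_sub, Polynomial.coeff_C_mul,
    Polynomial.coeff_X_pow, Polynomial.coeff_C, Polynomial.coeff_X, Polynomial.mul_coeff_zero,
    Polynomial.coeff_mul_C] at h1 h2
  norm_num at h1 h2
  constructor
  · linear_combination h2
  · linear_combination -h1

set_option maxHeartbeats 2000000 in
/-- assume ρ < 1 and 0 < |γ| ≤ ρ². Then the kernel cubic in δ has
exactly one root (with multiplicity) with |δ| < |γ|/2, and that root is nonzero. -/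
theorem stmt8 (a lam : ℝ) (ha : 0 < a) (ha1 : a < 1) (hl : 0 < lam) (hl1 : lam < 1)
    (hρ : rhoLoad a lam < 1)
    (g : ℂ) (hg0 : g ≠ 0) (hg1 : ‖g‖ ≤ (rhoLoad a lam)^2) :
    Multiset.card ((kernelCubic a lam g).roots.filter
        (fun z => ‖z‖ < ‖g‖ / 2)) = 1 ∧
    ∀ z ∈ (kernelCubic a lam g).roots, ‖z‖ < ‖g‖ / 2 → z ≠ 0 := by
  set G := ‖g‖ with hGdef
  have hG0 : 0 < G := norm_pos_iff.mpr hg0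
  -- real abbreviations
  set α := lam * ((1-a)*a) with hαdef
  set β := (1-lam) * ((1-a)*a) with hβdef
  set π := lam * ((1-a)^2 + a^2) with hπdef
  set κ := 2*β + π + α with hκdef
  have hα : 0 < α := by apply mul_pos hl; nlinarith
  have hβ : 0 < β := by apply mul_pos (by linarith); nlinarith
  have hπ : 0 < π := by apply mul_pos hl; nlinarith
  have hκ : 0 < κ := by positivity
  -- consequences of ρ < 1
  have hrho : rhoLoad a lam = π / (2*β) := by
    rw [rhoLoad, hπdef, hβdef]; ring_nf
  have hπβ : π < 2*β := by
    rw [hrho] at hρ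
    have := (div_lt_one (by linarith : (0:ℝ) < 2*β)).mp hρ
    linarith
  have hG2 : G * (2*β)^2 ≤ π^2 := by
    rw [hrho, div_pow] at hg1
    exact (le_div_iff₀ (by positivity)).mp hg1
  have hG1 : G < 1 := by nlinarith
  have hGq : G * (2*β) < π := by nlinarith
  have hlam2 : lam < 1/2 := by
    rw [hπdef, hβdef] at hπβ
    nlinarith [sq_nonneg (2*a-1)]
  have hαβ : α < 4*β := by
    rw [hαdef, hβdef]; nlinarith
  clear_value G α β π κ
  -- purely real inequalities, proved in a clean context
  have key : β*G^2 + (β*G + π)*(G/2)^2 + α*(G/2)^3 < (G/2) * (κ*G) := by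
    clear hρ hg1 hrho hπdef hβdef hαdef hGdef ha ha1 hl hl1 hlam2 hg0
    have h1 : G*(2*β) + G*α < 2*π + 4*α := by nlinarith
    rw [hκdef]
    nlinarith [mul_pos hG0 hG0, sq_nonneg G,
      mul_lt_mul_of_pos_right h1 (by positivity : (0:ℝ) < G^2/8)]
  set L : ℝ := (β*G + π + (3/4)*α*G)/κ with hLdef
  clear_value L
  have hL0 : 0 ≤ L := by rw [hLdef]; positivity
  have hL1 : L < 1 := by
    clear hρ hg1 hrho hπdef hβdef hαdef hGdef ha ha1 hl hl1 hlam2 hg0 key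
    rw [hLdef, div_lt_one hκ, hκdef]; nlinarith
  have hLκG : (β*G + π)*G + α*(3/4*G^2) = L*(κ*G) := by
    rw [hLdef]; field_simp
  have hclaim1 : ∀ m₁ m₂ M : ℝ, 0 ≤ m₁ → 0 ≤ m₂ → 0 ≤ M → m₁ < G/2 → m₂ < G/2 →
      α*M ≤ β*G + π + α*m₁ + α*m₂ →
      κ*G ≤ α*(m₁*m₂) + α*(m₁*M) + α*(m₂*M) → False := by
    intro m₁ m₂ M hm₁0 hm₂0 hM0 hm₁ hm₂ hb1 hb2
    clear hρ hg1 hrho hπdef hβdef hαdef hGdef ha ha1 hl hl1 hlam2 hg0 key hL0 hL1 hLκG hLdef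
    have e1 : α*M ≤ β*G + π + α*G := by nlinarith
    have e2 : α*(m₁*M) + α*(m₂*M) ≤ G*(α*M) := by
      nlinarith [mul_nonneg (by linarith : (0:ℝ) ≤ G - m₁ - m₂) (mul_nonneg hα.le hM0)]
    have e3 : α*(m₁*m₂) ≤ α*(G/2*(G/2)) :=
      mul_le_mul_of_nonneg_left
        (mul_le_mul hm₁.le hm₂.le hm₂0 (by positivity)) hα.le
    have e4 : G*(α*M) ≤ G*(β*G + π + α*G) :=
      mul_le_mul_of_nonneg_left e1 hG0.le
    have e5 : κ*G ≤ α*(G/2*(G/2)) + G*(β*G + π + α*G) := by linarith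
    rw [hκdef] at e5
    have e6 : (β + 5/4*α)*G^2 < (β + 5/4*α)*G := by
      nlinarith [mul_pos (show (0:ℝ) < β + 5/4*α by linarith)
        (mul_pos hG0 (show (0:ℝ) < 1 - G by linarith))]
    have e7 : (2*β+α)*G < (β + 5/4*α)*G := by nlinarith
    have e8 : 2*β+α < β + 5/4*α := lt_of_mul_lt_mul_right e7 hG0.le
    linarith
  -- rewrite the kernel cubic in terms of real coefficients
  open Polynomial in
  have eA : (lam:ℂ)*(1-(a:ℂ))*(a:ℂ) = ((α : ℝ) : ℂ) := by
    rw [hαdef]; push_cast; ring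
  have eB : (1-(lam:ℂ))*(1-(a:ℂ))*(a:ℂ)*g + (lam:ℂ)*((a:ℂ)^2+(1-(a:ℂ))^2)
      = ((β:ℝ):ℂ)*g + ((π:ℝ):ℂ) := by
    rw [hβdef, hπdef]; push_cast; ring
  have eC : (1 - ((1-(lam:ℂ))*((1-(a:ℂ))^2+(a:ℂ)^2) + (lam:ℂ)*(a:ℂ)*(1-(a:ℂ)))) * g
      = ((κ:ℝ):ℂ)*g := by
    rw [hκdef, hβdef, hπdef, hαdef]; push_cast; ring
  have eD : (1-(lam:ℂ))*(1-(a:ℂ))*(a:ℂ)*g^2 = ((β:ℝ):ℂ)*g^2 := by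
    rw [hβdef]; push_cast; ring
  have hPeq : kernelCubic a lam g
      = C ((α:ℝ):ℂ) * X^3 + C (((β:ℝ):ℂ)*g + ((π:ℝ):ℂ)) * X^2
        - C (((κ:ℝ):ℂ)*g) * X + C (((β:ℝ):ℂ)*g^2) := by
    rw [kernelCubic, eA, eB, eC, eD]
  set P : Polynomial ℂ := C ((α:ℝ):ℂ) * X^3 + C (((β:ℝ):ℂ)*g + ((π:ℝ):ℂ)) * X^2
        - C (((κ:ℝ):ℂ)*g) * X + C (((β:ℝ):ℂ)*g^2) with hPdef
  rw [hPeq]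
  clear_value P
  have hαC : ((α:ℝ):ℂ) ≠ 0 := by
    simpa using hα.ne'
  have hdeg : P.natDegree = 3 := by
    rw [hPdef]; compute_degree!
    exact hα.ne'
  have hP0 : P ≠ 0 := by
    intro h; rw [h] at hdeg; simp at hdeg
  have hcard3 : Multiset.card P.roots = 3 := by
    have hsp : P.Splits := IsAlgClosed.splits P
    have := hsp.natDegree_eq_card_roots
    omega
  -- === Existence: contraction mapping ===
  set Ψ : ℂ → ℂ := fun z =>
      (((β:ℝ):ℂ)*g^2 + (((β:ℝ):ℂ)*g + ((π:ℝ):ℂ))*z^2 + ((α:ℝ):ℂ)*z^3) / (((κ:ℝ):ℂ)*g)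
    with hΨdef
  clear_value Ψ
  have hβC : ‖((β:ℝ):ℂ)‖ = β := by rw [Complex.norm_real, Real.norm_eq_abs, abs_of_pos hβ]
  have hπC : ‖((π:ℝ):ℂ)‖ = π := by rw [Complex.norm_real, Real.norm_eq_abs, abs_of_pos hπ]
  have hαCa : ‖((α:ℝ):ℂ)‖ = α := by rw [Complex.norm_real, Real.norm_eq_abs, abs_of_pos hα]
  have hκC : ‖((κ:ℝ):ℂ)‖ = κ := by rw [Complex.norm_real, Real.norm_eq_abs, abs_of_pos hκ]
  have hκg : ((κ:ℝ):ℂ)*g ≠ 0 := by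
    apply mul_ne_zero _ hg0
    simpa using hκ.ne'
  have habsκg : ‖(((κ:ℝ):ℂ)*g)‖ = κ * G := by rw [norm_mul, hκC, ← hGdef]
  have hBg : ‖(((β:ℝ):ℂ)*g + ((π:ℝ):ℂ))‖ ≤ β*G + π := by
    calc ‖(((β:ℝ):ℂ)*g + ((π:ℝ):ℂ))‖
        ≤ ‖(((β:ℝ):ℂ)*g)‖ + ‖((π:ℝ):ℂ)‖ := norm_add_le _ _
      _ = β*G + π := by rw [norm_mul, hβC, hπC, ← hGdef]
  -- the map sends the closed ball of radius G/2 strictly inside itself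
  have hmap : ∀ z : ℂ, ‖z‖ ≤ G/2 → ‖(Ψ z)‖ < G/2 := by
    intro z hz
    have hz0 : 0 ≤ ‖z‖ := norm_nonneg z
    have hnum : ‖(((β:ℝ):ℂ)*g^2 + (((β:ℝ):ℂ)*g + ((π:ℝ):ℂ))*z^2 + ((α:ℝ):ℂ)*z^3)‖
        ≤ β*G^2 + (β*G + π)*(G/2)^2 + α*(G/2)^3 := by
      have t1 : ‖(((β:ℝ):ℂ)*g^2)‖ = β*G^2 := by rw [norm_mul, norm_pow, hβC, ← hGdef]
      have t2 : ‖((((β:ℝ):ℂ)*g + ((π:ℝ):ℂ))*z^2)‖ ≤ (β*G + π)*(G/2)^2 := by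
        rw [norm_mul, norm_pow]
        exact mul_le_mul hBg (pow_le_pow_left₀ hz0 hz 2) (by positivity) (by positivity)
      have t3 : ‖(((α:ℝ):ℂ)*z^3)‖ ≤ α*(G/2)^3 := by
        rw [norm_mul, norm_pow, hαCa]
        exact mul_le_mul_of_nonneg_left (pow_le_pow_left₀ hz0 hz 3) hα.le
      calc ‖(((β:ℝ):ℂ)*g^2 + (((β:ℝ):ℂ)*g + ((π:ℝ):ℂ))*z^2 + ((α:ℝ):ℂ)*z^3)‖
          ≤ ‖(((β:ℝ):ℂ)*g^2 + (((β:ℝ):ℂ)*g + ((π:ℝ):ℂ))*z^2)‖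
            + ‖(((α:ℝ):ℂ)*z^3)‖ := norm_add_le _ _
        _ ≤ ‖(((β:ℝ):ℂ)*g^2)‖ + ‖((((β:ℝ):ℂ)*g + ((π:ℝ):ℂ))*z^2)‖
            + ‖(((α:ℝ):ℂ)*z^3)‖ := by
              have := norm_add_le (((β:ℝ):ℂ)*g^2) ((((β:ℝ):ℂ)*g + ((π:ℝ):ℂ))*z^2)
              linarith
        _ ≤ β*G^2 + (β*G + π)*(G/2)^2 + α*(G/2)^3 := by linarith
    rw [hΨdef]
    simp only [norm_div, habsκg]
    rw [div_lt_iff₀ (by positivity)]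
    calc ‖(((β:ℝ):ℂ)*g^2 + (((β:ℝ):ℂ)*g + ((π:ℝ):ℂ))*z^2 + ((α:ℝ):ℂ)*z^3)‖
        ≤ β*G^2 + (β*G + π)*(G/2)^2 + α*(G/2)^3 := hnum
      _ < (G/2) * (κ*G) := key
  have hlip : ∀ z w : ℂ, ‖z‖ ≤ G/2 → ‖w‖ ≤ G/2 →
      ‖(Ψ z - Ψ w)‖ ≤ L * ‖(z - w)‖ := by
    intro z w hz hw
    have hz0 : 0 ≤ ‖z‖ := norm_nonneg z
    have hw0 : 0 ≤ ‖w‖ := norm_nonneg w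
    have hdiff : Ψ z - Ψ w = ((z - w) * ((((β:ℝ):ℂ)*g + ((π:ℝ):ℂ))*(z+w)
        + ((α:ℝ):ℂ)*(z^2 + z*w + w^2))) / (((κ:ℝ):ℂ)*g) := by
      rw [hΨdef]
      rw [div_sub_div_same]
      ring_nf
    rw [hdiff, norm_div, norm_mul, habsκg]
    rw [div_le_iff₀ (by positivity)]
    have hb1 : ‖((((β:ℝ):ℂ)*g + ((π:ℝ):ℂ))*(z+w))‖ ≤ (β*G + π)*G := by
      rw [norm_mul]
      have : ‖(z+w)‖ ≤ G := by
        have := norm_add_le z w; linarith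
      exact mul_le_mul hBg this (norm_nonneg _) (by positivity)
    have hb2 : ‖(((α:ℝ):ℂ)*(z^2 + z*w + w^2))‖ ≤ α*(3/4*G^2) := by
      rw [norm_mul, hαCa]
      apply mul_le_mul_of_nonneg_left _ hα.le
      have l1 : ‖(z^2)‖ ≤ (G/2)^2 := by
        rw [norm_pow]; exact pow_le_pow_left₀ hz0 hz 2
      have l2 : ‖(z*w)‖ ≤ (G/2)*(G/2) :=
        (norm_mul z w) ▸ mul_le_mul hz hw hw0 (by positivity)
      have l3 : ‖(w^2)‖ ≤ (G/2)^2 := by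
        rw [norm_pow]; exact pow_le_pow_left₀ hw0 hw 2
      have q1 := norm_add_le (z^2 + z*w) (w^2)
      have q2 := norm_add_le (z^2) (z*w)
      have q3 : (G/2)^2 = G^2/4 := by ring
      linarith
    have hbig : ‖((((β:ℝ):ℂ)*g + ((π:ℝ):ℂ))*(z+w)
        + ((α:ℝ):ℂ)*(z^2 + z*w + w^2))‖ ≤ (β*G + π)*G + α*(3/4*G^2) := by
      have := norm_add_le ((((β:ℝ):ℂ)*g + ((π:ℝ):ℂ))*(z+w))
        (((α:ℝ):ℂ)*(z^2 + z*w + w^2))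
      linarith
    calc ‖(z-w)‖ * ‖((((β:ℝ):ℂ)*g + ((π:ℝ):ℂ))*(z+w)
          + ((α:ℝ):ℂ)*(z^2 + z*w + w^2))‖
        ≤ ‖(z-w)‖ * ((β*G + π)*G + α*(3/4*G^2)) :=
          mul_le_mul_of_nonneg_left hbig (norm_nonneg _)
      _ = ‖(z-w)‖ * ((β*G + π)*G + α*(3/4*G^2)) := by ring
      _ = ‖(z-w)‖ * (L*(κ*G)) := by rw [hLκG]
      _ = L * ‖(z-w)‖ * (κ*G) := by ring
  -- apply the Banach fixed point theorem on the closed ball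
  have hfix : ∃ z₀ : ℂ, ‖z₀‖ ≤ G/2 ∧ Ψ z₀ = z₀ := by
    have hsc : IsComplete (Metric.closedBall (0:ℂ) (G/2)) :=
      Metric.isClosed_closedBall.isComplete
    have hsf : Set.MapsTo Ψ (Metric.closedBall (0:ℂ) (G/2)) (Metric.closedBall (0:ℂ) (G/2)) := by
      intro z hz
      rw [Metric.mem_closedBall, dist_zero_right] at hz ⊢
      exact (hmap z hz).le
    have hcw : ContractingWith L.toNNReal (hsf.restrict Ψ _ _) := by
      constructor
      · rwa [← NNReal.coe_lt_one, Real.coe_toNNReal _ hL0]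
      · apply LipschitzWith.of_dist_le_mul
        rintro ⟨x, hx⟩ ⟨y, hy⟩
        have hx' : ‖x‖ ≤ G/2 := by
          rw [Metric.mem_closedBall, dist_zero_right] at hx; exact hx
        have hy' : ‖y‖ ≤ G/2 := by
          rw [Metric.mem_closedBall, dist_zero_right] at hy; exact hy
        simp only [Set.MapsTo.val_restrict_apply, Subtype.dist_eq, Complex.dist_eq,
          Real.coe_toNNReal _ hL0]
        exact hlip x y hx' hy'
    have h0mem : (0:ℂ) ∈ Metric.closedBall (0:ℂ) (G/2) := by
      simp [Metric.mem_closedBall]; positivity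
    obtain ⟨y, hymem, hyfix, -⟩ :=
      hcw.exists_fixedPoint' hsc hsf h0mem (edist_ne_top _ _)
    refine ⟨y, ?_, hyfix⟩
    rwa [Metric.mem_closedBall, dist_zero_right] at hymem
  obtain ⟨z₀, hz₀mem, hz₀fix⟩ := hfix
  have hz₀lt : ‖z₀‖ < G/2 := by
    rw [← hz₀fix]; exact hmap z₀ hz₀mem
  have hz₀root : z₀ ∈ P.roots := by
    rw [Polynomial.mem_roots hP0]
    have hnum : ((β:ℝ):ℂ)*g^2 + (((β:ℝ):ℂ)*g + ((π:ℝ):ℂ))*z₀^2 + ((α:ℝ):ℂ)*z₀^3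
        = z₀ * (((κ:ℝ):ℂ)*g) := by
      have := hz₀fix
      rw [hΨdef] at this
      simp only at this
      exact (div_eq_iff hκg).mp this
    rw [Polynomial.IsRoot, hPdef]
    simp only [Polynomial.eval_add, Polynomial.eval_sub, Polynomial.eval_mul,
      Polynomial.eval_pow, Polynomial.eval_C, Polynomial.eval_X]
    linear_combination hnum
  have hexists : 1 ≤ Multiset.card (P.roots.filter (fun z => ‖z‖ < G/2)) := by
    exact Multiset.card_pos_iff_exists_mem.mpr
      ⟨z₀, Multiset.mem_filter.mpr ⟨hz₀root, hz₀lt⟩⟩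
  -- === At most one root in the open disc ===
  have hatmost : ¬ 2 ≤ Multiset.card (P.roots.filter (fun z => ‖z‖ < G/2)) := by
    intro h2
    set F := P.roots.filter (fun z => ‖z‖ < G/2) with hFdef
    obtain ⟨z₁, hz₁F⟩ := Multiset.card_pos_iff_exists_mem.mp (show 0 < Multiset.card F by omega)
    obtain ⟨F', hF'⟩ := Multiset.exists_cons_of_mem hz₁F
    have hF'card : 0 < Multiset.card F' := by
      have := congrArg Multiset.card hF'
      rw [Multiset.card_cons] at this
      omega
    obtain ⟨z₂, hz₂F'⟩ := Multiset.card_pos_iff_exists_mem.mp hF'card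
    obtain ⟨F'', hF''⟩ := Multiset.exists_cons_of_mem hz₂F'
    have hz₁p : ‖z₁‖ < G/2 := (Multiset.mem_filter.mp hz₁F).2
    have hz₂F : z₂ ∈ F := by rw [hF']; exact Multiset.mem_cons_of_mem hz₂F'
    have hz₂p : ‖z₂‖ < G/2 := (Multiset.mem_filter.mp hz₂F).2
    have hle : (z₁ ::ₘ z₂ ::ₘ 0) ≤ P.roots := by
      calc z₁ ::ₘ z₂ ::ₘ (0 : Multiset ℂ)
          ≤ z₁ ::ₘ z₂ ::ₘ F'' :=
            Multiset.cons_le_cons z₁ (Multiset.cons_le_cons z₂ (Multiset.zero_le F''))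
        _ = F := by rw [hF', hF'']
        _ ≤ P.roots := Multiset.filter_le _ _
    obtain ⟨rest, hrest⟩ := Multiset.le_iff_exists_add.mp hle
    have hrestcard : Multiset.card rest = 1 := by
      have hc := hcard3
      rw [hrest] at hc
      simp [Multiset.card_add, Multiset.card_cons] at hc
      omega
    obtain ⟨z₃, hz₃⟩ := Multiset.card_eq_one.mp hrestcard
    have hroots : P.roots = z₁ ::ₘ z₂ ::ₘ {z₃} := by
      rw [hrest, hz₃]
      simp [Multiset.cons_add]
    -- factor the polynomial
    have hsp : P.Splits := IsAlgClosed.splits P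
    have hfact := hsp.eq_prod_roots
    have hlead : P.leadingCoeff = ((α:ℝ):ℂ) := by
      rw [Polynomial.leadingCoeff, hdeg, hPdef]
      exact cubic_coeff3 _ _ _ _
    rw [hroots, hlead] at hfact
    simp only [Multiset.map_cons, Multiset.map_singleton, Multiset.prod_cons,
      Multiset.prod_singleton] at hfact
    have hexp : (X - C z₁) * ((X - C z₂) * (X - C z₃))
        = X^3 - C (z₁+z₂+z₃) * X^2 + C (z₁*z₂ + z₁*z₃ + z₂*z₃) * X - C (z₁*z₂*z₃) := by
      simp only [map_add, map_mul]
      ring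
    rw [hexp, hPdef] at hfact
    obtain ⟨hA2, hA1⟩ := cubic_vieta _ _ _ _ _ _ _ hfact
    -- absolute value estimates
    have hm₁0 : 0 ≤ ‖z₁‖ := norm_nonneg _
    have hm₂0 : 0 ≤ ‖z₂‖ := norm_nonneg _
    have hM0 : 0 ≤ ‖z₃‖ := norm_nonneg _
    have hb1 : α * ‖z₃‖ ≤ β*G + π + α*‖z₁‖ + α*‖z₂‖ := by
      have h3 : ((α:ℝ):ℂ)*z₃ = -(((β:ℝ):ℂ)*g + ((π:ℝ):ℂ)) - ((α:ℝ):ℂ)*z₁ - ((α:ℝ):ℂ)*z₂ := by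
        linear_combination hA2
      have c1 : ‖(((α:ℝ):ℂ)*z₃)‖
          ≤ ‖(-(((β:ℝ):ℂ)*g + ((π:ℝ):ℂ)) - ((α:ℝ):ℂ)*z₁)‖
            + ‖(((α:ℝ):ℂ)*z₂)‖ := by
        rw [h3]; exact habs_sub _ _
      have c2 : ‖(-(((β:ℝ):ℂ)*g + ((π:ℝ):ℂ)) - ((α:ℝ):ℂ)*z₁)‖
          ≤ ‖(-(((β:ℝ):ℂ)*g + ((π:ℝ):ℂ)))‖ + ‖(((α:ℝ):ℂ)*z₁)‖ :=
        habs_sub _ _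
      have c3 : ‖(-(((β:ℝ):ℂ)*g + ((π:ℝ):ℂ)))‖ ≤ β*G + π := by
        rw [norm_neg]; exact hBg
      have c4 : ‖(((α:ℝ):ℂ)*z₁)‖ = α * ‖z₁‖ := by rw [norm_mul, hαCa]
      have c5 : ‖(((α:ℝ):ℂ)*z₂)‖ = α * ‖z₂‖ := by rw [norm_mul, hαCa]
      have c6 : ‖(((α:ℝ):ℂ)*z₃)‖ = α * ‖z₃‖ := by rw [norm_mul, hαCa]
      rw [c4] at c2
      rw [c5] at c1
      rw [c6] at c1
      linarith
    have hb2 : κ*G ≤ α*(‖z₁‖ * ‖z₂‖)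
        + α*(‖z₁‖ * ‖z₃‖) + α*(‖z₂‖ * ‖z₃‖) := by
      have d0 : ‖(((α:ℝ):ℂ)*(z₁*z₂ + z₁*z₃ + z₂*z₃))‖ = κ*G := by
        rw [hA1, norm_neg, habsκg]
      have tsum : ‖(z₁*z₂ + z₁*z₃ + z₂*z₃)‖
          ≤ ‖z₁‖ * ‖z₂‖ + ‖z₁‖ * ‖z₃‖
            + ‖z₂‖ * ‖z₃‖ := by
        have t1 := norm_add_le (z₁*z₂ + z₁*z₃) (z₂*z₃)
        have t2 := norm_add_le (z₁*z₂) (z₁*z₃)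
        have m1 : ‖(z₁*z₂)‖ = ‖z₁‖ * ‖z₂‖ := norm_mul _ _
        have m2 : ‖(z₁*z₃)‖ = ‖z₁‖ * ‖z₃‖ := norm_mul _ _
        have m3 : ‖(z₂*z₃)‖ = ‖z₂‖ * ‖z₃‖ := norm_mul _ _
        rw [m1, m2] at t2
        rw [m3] at t1
        linarith
      have d1 : ‖(((α:ℝ):ℂ)*(z₁*z₂ + z₁*z₃ + z₂*z₃))‖
          ≤ α*(‖z₁‖ * ‖z₂‖) + α*(‖z₁‖ * ‖z₃‖)
            + α*(‖z₂‖ * ‖z₃‖) := by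
        rw [norm_mul, hαCa]
        have := mul_le_mul_of_nonneg_left tsum hα.le
        linarith
      linarith [d0 ▸ d1]
    exact hclaim1 (‖z₁‖) (‖z₂‖) (‖z₃‖)
      hm₁0 hm₂0 hM0 hz₁p hz₂p hb1 hb2
  refine ⟨?_, ?_⟩
  · omega
  · intro z hz _ h0
    rw [h0] at hz
    have hroot0 : P.IsRoot 0 := (Polynomial.mem_roots hP0).mp hz
    rw [hPdef] at hroot0
    simp only [Polynomial.IsRoot, Polynomial.eval_add, Polynomial.eval_sub,
      Polynomial.eval_mul, Polynomial.eval_pow, Polynomial.eval_C, Polynomial.eval_X] at hroot0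
    norm_num at hroot0
    rcases hroot0 with h | h
    · exact absurd (by exact_mod_cast h) hβ.ne'
    · exact hg0 h
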